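/- In a vertex elimination graph, every vertex v_i that has a path (in the original graph G) to the last vertex v_{|V|} of the elimination ordering has, in the elimination graph, an out-edge to some vertex ordered later than itself: there exists j>i with (v_i,v_j)∈E*. -/

import Mathlib

/-- The vertex elimination sequence: `elimSeq E i` is the edge relation of the
graph `G_i` obtained from `G = G_0` by successively eliminating the vertices
`0, 1, ..., i-1` (the elimination ordering is the index order on `Fin n`).
Eliminating a vertex removes it and connects each of its in-neighbors to each
of its out-neighbors (no self-loops). -/
def elimSeq {n : ℕ} (E : Fin n → Fin n → Prop) : ℕ → Fin n → Fin n → Prop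
  | 0 => E
  | (i+1) => fun j k =>
      j.val ≠ i ∧ k.val ≠ i ∧
      (elimSeq E i j k ∨
        (j ≠ k ∧ ∃ m : Fin n, m.val = i ∧ elimSeq E i j m ∧ elimSeq E i m k))

/-- The vertex elimination graph `G*`: the union of all the `G_i`. -/
def estar {n : ℕ} (E : Fin n → Fin n → Prop) (j k : Fin n) : Prop :=
  ∃ i, elimSeq E i j k

/-- `tri E a b c` : the triangle recording that the edge `(a, c)` is created
while eliminating the (middle) vertex `b`. -/
def tri {n : ℕ} (E : Fin n → Fin n → Prop) (a b c : Fin n) : Prop :=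
  a ≠ c ∧ elimSeq E b.val a b ∧ elimSeq E b.val b c

/-- A directed graph is acyclic iff no vertex lies on a nonempty closed walk. -/
def Acyclic {n : ℕ} (E : Fin n → Fin n → Prop) : Prop :=
  ∀ v, ¬ Relation.TransGen E v v

/-- The graph `G_M` induced by a model `σ` via the edge variables `e`. -/
def modelGraph {n : ℕ} {Var : Type*} (E : Fin n → Fin n → Prop)
    (e : Fin n → Fin n → Var) (σ : Var → Prop) : Fin n → Fin n → Prop :=
  fun i j => E i j ∧ σ (e i j)


section Stmt11Aux

private lemma chain_of_transGen' {α : Type*} {r : α → α → Prop} {a b : α}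
    (h : Relation.TransGen r a b) : ∃ l, List.Chain r a (l ++ [b]) := by
  induction h with
  | single h => exact ⟨[], by simp [List.Chain, h]⟩
  | @tail b c h hbc ih =>
    obtain ⟨l, hl⟩ := ih
    refine ⟨l ++ [b], ?_⟩
    have : l ++ [b] ++ [c] = l ++ b :: [c] := by simp
    rw [this]
    exact (List.isChain_cons_split (l₁ := l)).mpr ⟨hl, by simp [List.Chain, hbc]⟩

private lemma split_first' {α : Type*} (P : α → Prop) [DecidablePred P] :
    ∀ (l : List α), (∃ x ∈ l, P x) →
      ∃ l1 x l2, l = l1 ++ x :: l2 ∧ P x ∧ ∀ y ∈ l1, ¬ P y := by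
  intro l
  induction l with
  | nil => simp
  | cons b t ih =>
    intro h
    by_cases hb : P b
    · exact ⟨[], b, t, rfl, hb, by simp⟩
    · have ht : ∃ x ∈ t, P x := by
        obtain ⟨x, hx, hpx⟩ := h
        rcases List.mem_cons.mp hx with rfl | hxt
        · exact absurd hpx hb
        · exact ⟨x, hxt, hpx⟩
      obtain ⟨l1, x, l2, he, hp, hnp⟩ := ih ht
      refine ⟨b :: l1, x, l2, by rw [he]; rfl, hp, ?_⟩
      intro y hy
      rcases List.mem_cons.mp hy with rfl | hy
      · exact hb
      · exact hnp y hy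

private lemma split_last' {α : Type*} (P : α → Prop) [DecidablePred P]
    (l : List α) (h : ∃ x ∈ l, P x) :
    ∃ l1 x l2, l = l1 ++ x :: l2 ∧ P x ∧ ∀ y ∈ l2, ¬ P y := by
  have h' : ∃ x ∈ l.reverse, P x := by simpa using h
  obtain ⟨r1, x, r2, he, hp, hnp⟩ := split_first' P l.reverse h'
  refine ⟨r2.reverse, x, r1.reverse, ?_, hp, ?_⟩
  · have := congrArg List.reverse he
    simpa using this
  · intro y hy
    exact hnp y (by simpa using hy)

private lemma key' {n : ℕ} (E : Fin (n+1) → Fin (n+1) → Prop) :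
    ∀ (s : ℕ) (l : List (Fin (n+1))) (a b : Fin (n+1)),
      List.Chain E a (l ++ [b]) → s ≤ a.val → s ≤ b.val → a ≠ b →
      (∀ x ∈ l, x.val < s) → elimSeq E s a b := by
  intro s
  induction s with
  | zero =>
    intro l a b hc _ _ _ hl
    have hnil : l = [] := by
      cases l with
      | nil => rfl
      | cons x t => exact absurd (hl x (by simp)) (by omega)
    subst hnil
    simpa [elimSeq] using (List.chain_cons.mp hc).1
  | succ s ih =>
    intro l a b hc ha hb hab hl
    by_cases hm : ∃ x ∈ l, x.val = s
    · obtain ⟨p1, x1, p2, hep, hx1, hnp⟩ := split_first' (fun y => y.val = s) l hm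
      obtain ⟨q1, x2, q2, heq, hx2, hnq⟩ := split_last' (fun y => y.val = s) l hm
      have hx12 : x1 = x2 := Fin.ext (by rw [hx1, hx2])
      have hc1 : List.Chain E a (p1 ++ [x1]) := by
        have : l ++ [b] = p1 ++ x1 :: (p2 ++ [b]) := by simp [hep]
        rw [this] at hc
        exact (List.isChain_cons_split.mp hc).1
      have hc2 : List.Chain E x2 (q2 ++ [b]) := by
        have : l ++ [b] = q1 ++ x2 :: (q2 ++ [b]) := by simp [heq]
        rw [this] at hc
        exact (List.isChain_cons_split.mp hc).2
      have hax : a ≠ x1 := fun h => by rw [h] at ha; omega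
      have hxb : x2 ≠ b := fun h => by rw [← h] at hb; omega
      have h1 : elimSeq E s a x1 := by
        refine ih p1 a x1 hc1 (by omega) (by omega) hax ?_
        intro y hy
        have hyl : y ∈ l := by rw [hep]; exact List.mem_append_left _ hy
        have := hl y hyl
        have := hnp y hy
        omega
      have h2 : elimSeq E s x2 b := by
        refine ih q2 x2 b hc2 (by omega) (by omega) hxb ?_
        intro y hy
        have hyl : y ∈ l := by
          rw [heq]; exact List.mem_append_right _ (List.mem_cons_of_mem _ hy)
        have := hl y hyl
        have := hnq y hy
        omega
      exact ⟨by omega, by omega, Or.inr ⟨hab, x1, hx1, h1, hx12 ▸ h2⟩⟩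
    · push_neg at hm
      have h0 : elimSeq E s a b := by
        refine ih l a b hc (by omega) (by omega) hab ?_
        intro y hy
        have := hl y hy
        have := hm y hy
        omega
      exact ⟨by omega, by omega, Or.inl h0⟩

private lemma a_lt_last' {n : ℕ} {a : Fin (n+1)} (ha : a ≠ Fin.last n) : a < Fin.last n := by
  rw [Fin.lt_def]
  have h1 : a.val ≤ n := Nat.lt_succ_iff.mp a.isLt
  have h2 : a.val ≠ n := fun h => ha (Fin.ext h)
  simpa [Fin.last] using by omega

private lemma low_case' {n : ℕ} (E : Fin (n+1) → Fin (n+1) → Prop) (l : List (Fin (n+1)))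
    (a : Fin (n+1)) (hc : List.Chain E a (l ++ [Fin.last n])) (ha : a ≠ Fin.last n)
    (hlow : ∀ x ∈ l, x.val < a.val) : ∃ j, a < j ∧ estar E a j := by
  refine ⟨Fin.last n, a_lt_last' ha, a.val, ?_⟩
  exact key' E a.val l a (Fin.last n) hc le_rfl (by simp [Fin.last]; omega) ha hlow

private lemma final' {n : ℕ} (E : Fin (n+1) → Fin (n+1) → Prop) :
    ∀ (N : ℕ) (l : List (Fin (n+1))) (a : Fin (n+1)), l.length ≤ N →
      List.Chain E a (l ++ [Fin.last n]) → a ≠ Fin.last n →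
      ∃ j, a < j ∧ estar E a j := by
  intro N
  induction N with
  | zero =>
    intro l a hN hc ha
    have : l = [] := List.length_eq_zero_iff.mp (Nat.le_zero.mp hN)
    subst this
    exact low_case' E [] a hc ha (by simp)
  | succ N ih =>
    intro l a hN hc ha
    by_cases hx : ∃ x ∈ l, a.val ≤ x.val
    · obtain ⟨l1, x, l2, he, hax, hlow⟩ := split_first' (fun y => a.val ≤ y.val) l hx
      have hsplit : l ++ [Fin.last n] = l1 ++ x :: (l2 ++ [Fin.last n]) := by simp [he]
      rw [hsplit] at hc
      obtain ⟨hc1, hc2⟩ := List.isChain_cons_split.mp hc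
      by_cases hxa : x = a
      · subst hxa
        refine ih l2 x ?_ hc2 ha
        have : l.length = l1.length + 1 + l2.length := by simp [he]; omega
        omega
      · have hlt : a.val < x.val := by
          rcases lt_or_eq_of_le hax with h | h
          · exact h
          · exact absurd (Fin.ext h.symm) hxa
        refine ⟨x, Fin.lt_def.mpr hlt, a.val, ?_⟩
        refine key' E a.val l1 a x hc1 le_rfl (by omega) (Ne.symm hxa) ?_
        intro y hy
        have := hlow y hy
        omega
    · push_neg at hx
      exact low_case' E l a hc ha hx

end Stmt11Aux

/-- every vertex `i` (other than the last vertex of the ordering)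
with a path in `G` to the last vertex has, in the elimination graph, an
out-edge to some vertex ordered later than itself. -/
theorem stmt11 {n : ℕ} (E : Fin (n+1) → Fin (n+1) → Prop) (i : Fin (n+1))
    (hi : i ≠ Fin.last n)
    (hpath : Relation.TransGen E i (Fin.last n)) :
    ∃ j : Fin (n+1), i < j ∧ estar E i j := by
  obtain ⟨l, hl⟩ := chain_of_transGen' hpath
  exact final' E l.length l i le_rfl hl hi
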